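/- Let X be a real Hilbert space, let T be a closed densely defined linear operator in X, and let (E_n) be a bounding sequence for T such that for every n the everywhere-defined bounded operator TE_n : x ↦ T(E_n x) is normal, i.e. (TE_n)*(TE_n) = (TE_n)(TE_n)*. Then T is normal: the operators T*T and TT* are equal (they have the same domain and agree there). (Lemma 24, in the real Hilbert space setting) -/

import Mathlib

open scoped InnerProductSpace RealInnerProductSpace

namespace Stmt14

variable {X : Type*} [NormedAddCommGroup X] [InnerProductSpace ℝ X] [CompleteSpace X]

/-- Composition `S ∘ T` of two partially defined operators, with domain
`{x ∈ D(T) : T x ∈ D(S)}`. -/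
noncomputable def pComp (S T : X →ₗ.[ℝ] X) : X →ₗ.[ℝ] X where
  domain :=
  { carrier := {x | ∃ hx : x ∈ T.domain, T ⟨x, hx⟩ ∈ S.domain}
    add_mem' := by
      rintro x y ⟨hx, hx'⟩ ⟨hy, hy'⟩
      refine ⟨T.domain.add_mem hx hy, ?_⟩
      have e : (⟨x + y, T.domain.add_mem hx hy⟩ : T.domain) = ⟨x, hx⟩ + ⟨y, hy⟩ := rfl
      rw [e, T.map_add]
      exact S.domain.add_mem hx' hy'
    zero_mem' := by
      refine ⟨T.domain.zero_mem, ?_⟩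
      have e : (⟨(0 : X), T.domain.zero_mem⟩ : T.domain) = 0 := rfl
      rw [e, T.map_zero]
      exact S.domain.zero_mem
    smul_mem' := by
      rintro c x ⟨hx, hx'⟩
      refine ⟨T.domain.smul_mem c hx, ?_⟩
      have e : (⟨c • x, T.domain.smul_mem c hx⟩ : T.domain) = c • ⟨x, hx⟩ := rfl
      rw [e, T.map_smul]
      exact S.domain.smul_mem c hx' }
  toFun :=
  { toFun := fun x => S ⟨T ⟨x.1, x.2.choose⟩, x.2.choose_spec⟩
    map_add' := by
      rintro x y
      have eT : T ⟨(x + y : _), (x + y).2.choose⟩ = T ⟨x.1, x.2.choose⟩ + T ⟨y.1, y.2.choose⟩ := by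
        rw [show (⟨(x + y : _), (x + y).2.choose⟩ : T.domain)
            = ⟨x.1, x.2.choose⟩ + ⟨y.1, y.2.choose⟩ from Subtype.ext rfl, T.map_add]
      have eS : (⟨T ⟨(x + y : _), (x + y).2.choose⟩, (x + y).2.choose_spec⟩ : S.domain)
          = ⟨T ⟨x.1, x.2.choose⟩, x.2.choose_spec⟩ + ⟨T ⟨y.1, y.2.choose⟩, y.2.choose_spec⟩ :=
        Subtype.ext eT
      show S _ = S _ + S _
      rw [eS, S.map_add]
    map_smul' := by
      rintro c x
      have eT : T ⟨(c • x : _), (c • x).2.choose⟩ = c • T ⟨x.1, x.2.choose⟩ := by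
        rw [show (⟨(c • x : _), (c • x).2.choose⟩ : T.domain)
            = c • ⟨x.1, x.2.choose⟩ from Subtype.ext rfl, T.map_smul]
      have eS : (⟨T ⟨(c • x : _), (c • x).2.choose⟩, (c • x).2.choose_spec⟩ : S.domain)
          = c • ⟨T ⟨x.1, x.2.choose⟩, x.2.choose_spec⟩ :=
        Subtype.ext eT
      show S _ = c • S _
      rw [eS, S.map_smul] }

/-- `E` is a bounding projection for the partially defined operator `T`: `E` is an orthogonal
projection whose range is contained in `D(T)`, the everywhere-defined operator `x ↦ T (E x)`
is bounded, and `T (E x) = E (T x)` for every `x ∈ D(T)`. -/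
structure IsBoundingProjection (T : X →ₗ.[ℝ] X) (E : X →L[ℝ] X) : Prop where
  idem : IsIdempotentElem E
  selfAdjoint : IsSelfAdjoint E
  mem_domain : ∀ x, E x ∈ T.domain
  bounded : ∃ C : ℝ, ∀ x, ‖T ⟨E x, mem_domain x⟩‖ ≤ C * ‖x‖
  commutes : ∀ y : T.domain, E (T y) = T ⟨E y, mem_domain y⟩

/-- A bounding sequence for `T`: an increasing (in range) sequence of bounding projections
whose ranges have dense union. -/
structure IsBoundingSequence (T : X →ₗ.[ℝ] X) (E : ℕ → X →L[ℝ] X) : Prop where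
  bounding : ∀ n, IsBoundingProjection T (E n)
  mono : ∀ n, LinearMap.range (E n).toLinearMap ≤ LinearMap.range (E (n + 1)).toLinearMap
  dense_union : Dense (⋃ n, Set.range (E n))


/-- The bounded operator `x ↦ T (E x)` associated with a bounding projection. -/
noncomputable def bop (T : X →ₗ.[ℝ] X) (E : X →L[ℝ] X) (h : IsBoundingProjection T E) :
    X →L[ℝ] X :=
  LinearMap.mkContinuousOfExistsBound
    { toFun := fun x => T ⟨E x, h.mem_domain x⟩
      map_add' := fun x y => by
        show T ⟨E (x + y), h.mem_domain (x + y)⟩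
            = T ⟨E x, h.mem_domain x⟩ + T ⟨E y, h.mem_domain y⟩
        rw [show (⟨E (x + y), h.mem_domain (x + y)⟩ : T.domain)
            = ⟨E x, h.mem_domain x⟩ + ⟨E y, h.mem_domain y⟩ from Subtype.ext (map_add E x y),
          T.map_add]
      map_smul' := fun c x => by
        show T ⟨E (c • x), h.mem_domain (c • x)⟩ = (RingHom.id ℝ) c • T ⟨E x, h.mem_domain x⟩
        rw [show (⟨E (c • x), h.mem_domain (c • x)⟩ : T.domain)
            = c • (⟨E x, h.mem_domain x⟩ : T.domain) from Subtype.ext (map_smul E c x),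
          T.map_smul]
        rfl }
    h.bounded

theorem bop_apply (T : X →ₗ.[ℝ] X) (E : X →L[ℝ] X) (h : IsBoundingProjection T E) (x : X) :
    bop T E h x = T ⟨E x, h.mem_domain x⟩ := rfl

/-- A sequence whose pairwise squared distances are differences of a Cauchy scalar sequence is
Cauchy. -/
theorem cauchy_of_sq {u : ℕ → X} {s : ℕ → ℝ} (hs : CauchySeq s)
    (h : ∀ n m, n ≤ m → ‖u m - u n‖ ^ 2 = s m - s n) : CauchySeq u := by
  rw [Metric.cauchySeq_iff'] at hs ⊢
  intro ε hε
  obtain ⟨N, hN⟩ := hs (ε ^ 2) (by positivity)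
  refine ⟨N, fun n hn => ?_⟩
  have h1 : ‖u n - u N‖ ^ 2 = s n - s N := h N n hn
  have h2 : dist (s n) (s N) < ε ^ 2 := hN n hn
  rw [Real.dist_eq] at h2
  have h3 : ‖u n - u N‖ ^ 2 < ε ^ 2 := by
    rw [h1]
    calc s n - s N ≤ |s n - s N| := le_abs_self _
      _ < ε ^ 2 := h2
  rw [dist_eq_norm]
  exact lt_of_pow_lt_pow_left₀ 2 hε.le h3

/-- Closedness of `T` via sequences. -/
theorem closed_limit (T : X →ₗ.[ℝ] X) (hT : T.IsClosed) {v : ℕ → X} (hv : ∀ n, v n ∈ T.domain)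
    {M R : X} (h1 : Filter.Tendsto v Filter.atTop (nhds M))
    (h2 : Filter.Tendsto (fun n => T ⟨v n, hv n⟩) Filter.atTop (nhds R)) :
    ∃ h : M ∈ T.domain, T ⟨M, h⟩ = R := by
  have hmem : (M, R) ∈ (T.graph : Set (X × X)) :=
    hT.mem_of_tendsto (h1.prodMk_nhds h2)
      (Filter.Eventually.of_forall fun n => T.mem_graph ⟨v n, hv n⟩)
  rcases T.mem_graph_iff.mp hmem with ⟨⟨y, hy⟩, hy1, hy2⟩
  dsimp only at hy1
  subst hy1
  exact ⟨hy, hy2⟩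

/-- "Closedness" of the adjoint via sequences. -/
theorem adjoint_limit (T : X →ₗ.[ℝ] X) (hTdense : Dense (T.domain : Set X))
    {v : ℕ → X} (hv : ∀ n, v n ∈ T.adjoint.domain) {M R : X}
    (h1 : Filter.Tendsto v Filter.atTop (nhds M))
    (h2 : Filter.Tendsto (fun n => T.adjoint ⟨v n, hv n⟩) Filter.atTop (nhds R)) :
    ∃ h : M ∈ T.adjoint.domain, T.adjoint ⟨M, h⟩ = R := by
  have key : ∀ y : T.domain, ⟪R, (y : X)⟫ = ⟪M, T y⟫ := by
    intro y
    have e1 : Filter.Tendsto (fun n => ⟪T.adjoint ⟨v n, hv n⟩, (y : X)⟫) Filter.atTop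
        (nhds ⟪R, (y : X)⟫) := h2.inner tendsto_const_nhds
    have e2 : (fun n => ⟪T.adjoint ⟨v n, hv n⟩, (y : X)⟫) = fun n => ⟪v n, T y⟫ :=
      funext fun n => (LinearPMap.adjoint_isFormalAdjoint hTdense) ⟨v n, hv n⟩ y
    rw [e2] at e1
    exact tendsto_nhds_unique e1 (h1.inner tendsto_const_nhds)
  have hm : M ∈ T.adjoint.domain := LinearPMap.mem_adjoint_domain_of_exists M ⟨R, key⟩
  exact ⟨hm, LinearPMap.adjoint_apply_eq hTdense ⟨M, hm⟩ key⟩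

/-- Lemma 24 (real Hilbert space setting): if `T` is closed and densely defined and admits a
bounding sequence `(E n)` such that each everywhere-defined bounded operator `x ↦ T (E n x)` is
normal, then `T` is normal, i.e. `T*T = TT*`. -/
theorem isNormal_of_boundingSequence_normal (T : X →ₗ.[ℝ] X) (hTclosed : T.IsClosed)
    (hTdense : Dense (T.domain : Set X)) (E : ℕ → X →L[ℝ] X)
    (hE : IsBoundingSequence T E)
    (hnormal : ∀ (n : ℕ) (B : X →L[ℝ] X),
      (∀ x, B x = T ⟨E n x, (hE.bounding n).mem_domain x⟩) →
      (ContinuousLinearMap.adjoint B).comp B = B.comp (ContinuousLinearMap.adjoint B)) :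
    pComp T.adjoint T = pComp T T.adjoint := by
  have hbp : ∀ n, IsBoundingProjection T (E n) := hE.bounding
  set B : ℕ → X →L[ℝ] X := fun n => bop T (E n) (hbp n) with hBdef
  have hBapp : ∀ n x, B n x = T ⟨E n x, (hbp n).mem_domain x⟩ := fun n x => rfl
  -- basic projection facts
  have hidem : ∀ n x, E n (E n x) = E n x := fun n x => by
    conv_rhs => rw [← (hbp n).idem]
    rfl
  have hadjE : ∀ n, ContinuousLinearMap.adjoint (E n) = E n := fun n =>
    (hbp n).selfAdjoint.adjoint_eq
  have hsa : ∀ n (x y : X), ⟪E n x, y⟫ = ⟪x, E n y⟫ := fun n x y => by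
    conv_lhs => rw [← hadjE n]
    exact ContinuousLinearMap.adjoint_inner_left _ _ _
  have hnorm_le : ∀ n (x : X), ‖E n x‖ ≤ ‖x‖ := by
    intro n x
    have h1 : ‖E n x‖ ^ 2 ≤ ‖x‖ * ‖E n x‖ := by
      rw [← real_inner_self_eq_norm_sq]
      calc ⟪E n x, E n x⟫ = ⟪x, E n (E n x)⟫ := hsa n x (E n x)
        _ = ⟪x, E n x⟫ := by rw [hidem]
        _ ≤ ‖x‖ * ‖E n x‖ := real_inner_le_norm _ _
    nlinarith [norm_nonneg (E n x), norm_nonneg x]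
  have hrange : ∀ {n m : ℕ}, n ≤ m →
      LinearMap.range (E n).toLinearMap ≤ LinearMap.range (E m).toLinearMap :=
    fun {n m} h => monotone_nat_of_le_succ (f := fun k => LinearMap.range (E k).toLinearMap)
      hE.mono h
  have hEE : ∀ {n m : ℕ}, n ≤ m → ∀ x, E m (E n x) = E n x := by
    intro n m h x
    obtain ⟨y, hy⟩ := hrange h (LinearMap.mem_range_self (E n).toLinearMap x)
    have hy' : E m y = E n x := hy
    rw [← hy', hidem]
  have hEE' : ∀ {n m : ℕ}, n ≤ m → ∀ x, E n (E m x) = E n x := by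
    intro n m h x
    apply ext_inner_right ℝ
    intro y
    calc ⟪E n (E m x), y⟫ = ⟪E m x, E n y⟫ := hsa n _ _
      _ = ⟪x, E m (E n y)⟫ := hsa m _ _
      _ = ⟪x, E n y⟫ := by rw [hEE h]
      _ = ⟪E n x, y⟫ := (hsa n x y).symm
  -- strong convergence of the projections to the identity
  have htend : ∀ x : X, Filter.Tendsto (fun n => E n x) Filter.atTop (nhds x) := by
    intro x
    rw [Metric.tendsto_atTop]
    intro ε hε
    have hx : x ∈ closure (⋃ n, Set.range (E n)) := hE.dense_union x
    rw [Metric.mem_closure_iff] at hx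
    obtain ⟨y, hy, hxy⟩ := hx (ε / 2) (by positivity)
    rw [Set.mem_iUnion] at hy
    obtain ⟨N, z, hz⟩ := hy
    refine ⟨N, fun n hn => ?_⟩
    have hfix : E n y = y := by rw [← hz]; exact hEE hn z
    have hsplit : E n x - x = E n (x - y) + (y - x) := by
      rw [map_sub, hfix]; abel
    have hd : dist x y = ‖x - y‖ := dist_eq_norm _ _
    calc dist (E n x) x = ‖E n x - x‖ := dist_eq_norm _ _
      _ ≤ ‖E n (x - y)‖ + ‖y - x‖ := by rw [hsplit]; exact norm_add_le _ _
      _ ≤ ‖x - y‖ + ‖y - x‖ := by gcongr; exact hnorm_le n _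
      _ < ε := by rw [norm_sub_rev y x, ← hd]; linarith
  -- Pythagoras
  have hpyth : ∀ n (x : X), ‖x - E n x‖ ^ 2 = ‖x‖ ^ 2 - ‖E n x‖ ^ 2 := by
    intro n x
    have h1 : ⟪x, E n x⟫ = ‖E n x‖ ^ 2 := by
      rw [← real_inner_self_eq_norm_sq]
      calc ⟪x, E n x⟫ = ⟪x, E n (E n x)⟫ := by rw [hidem]
        _ = ⟪E n x, E n x⟫ := (hsa n x (E n x)).symm
    rw [norm_sub_sq_real, h1]; ring
  -- commutation facts
  have hcomm : ∀ n (y : T.domain), E n (T y) = B n y := fun n y => (hbp n).commutes y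
  have hBE : ∀ {n m : ℕ}, n ≤ m → ∀ x, B m (E n x) = B n x := by
    intro n m h x
    rw [hBapp, hBapp]
    exact congrArg _ (Subtype.ext (hEE h x))
  have hEB : ∀ {n m : ℕ}, n ≤ m → ∀ x, E n (B m x) = B n x := by
    intro n m h x
    calc E n (B m x) = E n (T ⟨E m x, (hbp m).mem_domain x⟩) := by rw [hBapp]
      _ = B n (E m x) := hcomm n _
      _ = T ⟨E n (E m x), (hbp n).mem_domain _⟩ := hBapp n _
      _ = T ⟨E n x, (hbp n).mem_domain x⟩ := congrArg _ (Subtype.ext (hEE' h x))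
      _ = B n x := (hBapp n x).symm
  -- adjoint facts for B
  have hadjBE : ∀ {n m : ℕ}, n ≤ m → ∀ x,
      E n (ContinuousLinearMap.adjoint (B m) x) = ContinuousLinearMap.adjoint (B n) x := by
    intro n m h x
    have hc : B n = (B m).comp (E n) := ContinuousLinearMap.ext fun z => (hBE h z).symm
    rw [hc, ContinuousLinearMap.adjoint_comp, hadjE n]
    rfl
  have hadjE2 : ∀ n (x : X), ContinuousLinearMap.adjoint (B n) (E n x)
      = ContinuousLinearMap.adjoint (B n) x := by
    intro n x
    have hc : B n = (E n).comp (B n) := ContinuousLinearMap.ext fun z => (hEB le_rfl z).symm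
    conv_rhs => rw [hc, ContinuousLinearMap.adjoint_comp, hadjE n]
    rfl
  -- E n x lies in the adjoint domain with value (B n)† x
  have hkey : ∀ n (x : X) (y : T.domain),
      ⟪ContinuousLinearMap.adjoint (B n) x, (y : X)⟫ = ⟪E n x, T y⟫ := by
    intro n x y
    calc ⟪ContinuousLinearMap.adjoint (B n) x, (y : X)⟫ = ⟪x, B n y⟫ :=
          ContinuousLinearMap.adjoint_inner_left _ _ _
      _ = ⟪x, E n (T y)⟫ := by rw [hcomm n y]
      _ = ⟪E n x, T y⟫ := (hsa n x (T y)).symm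
  have hmemAdj : ∀ n (x : X), E n x ∈ T.adjoint.domain := fun n x =>
    LinearPMap.mem_adjoint_domain_of_exists _ ⟨ContinuousLinearMap.adjoint (B n) x, hkey n x⟩
  have hTadjE : ∀ n (x : X), T.adjoint ⟨E n x, hmemAdj n x⟩ = ContinuousLinearMap.adjoint (B n) x :=
    fun n x => LinearPMap.adjoint_apply_eq hTdense _ (hkey n x)
  have hEadjT : ∀ n (x : T.adjoint.domain),
      E n (T.adjoint x) = ContinuousLinearMap.adjoint (B n) (x : X) := by
    intro n x
    apply hTdense.eq_of_inner_right ℝ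
    intro v _
    calc ⟪(v : X), E n (T.adjoint x)⟫ = ⟪E n (v : X), T.adjoint x⟫ := (hsa n v _).symm
      _ = ⟪T.adjoint x, E n (v : X)⟫ := real_inner_comm _ _
      _ = ⟪(x : X), T ⟨E n (v : X), (hbp n).mem_domain v⟩⟫ :=
          (LinearPMap.adjoint_isFormalAdjoint hTdense) x ⟨E n (v : X), (hbp n).mem_domain v⟩
      _ = ⟪(x : X), B n v⟫ := by rw [← hBapp]
      _ = ⟪ContinuousLinearMap.adjoint (B n) (x : X), (v : X)⟫ :=
          (ContinuousLinearMap.adjoint_inner_left _ _ _).symm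
      _ = ⟪(v : X), ContinuousLinearMap.adjoint (B n) (x : X)⟫ := real_inner_comm _ _
  -- normality, pointwise
  have hnm : ∀ n (x : X), ContinuousLinearMap.adjoint (B n) (B n x)
      = B n (ContinuousLinearMap.adjoint (B n) x) := by
    intro n x
    have h := hnormal n (B n) (fun y => rfl)
    exact congrFun (congrArg (fun (A : X →L[ℝ] X) => (A : X → X)) h) x
  have hnormeq : ∀ n (x : X), ‖ContinuousLinearMap.adjoint (B n) x‖ = ‖B n x‖ := by
    intro n x
    have h2 : ‖B n x‖ ^ 2 = ‖ContinuousLinearMap.adjoint (B n) x‖ ^ 2 := by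
      rw [← real_inner_self_eq_norm_sq, ← real_inner_self_eq_norm_sq]
      calc ⟪B n x, B n x⟫ = ⟪x, ContinuousLinearMap.adjoint (B n) (B n x)⟫ :=
            (ContinuousLinearMap.adjoint_inner_right _ _ _).symm
        _ = ⟪x, B n (ContinuousLinearMap.adjoint (B n) x)⟫ := by rw [hnm]
        _ = ⟪ContinuousLinearMap.adjoint (B n) x, ContinuousLinearMap.adjoint (B n) x⟫ :=
            (ContinuousLinearMap.adjoint_inner_left _ _ _).symm
    rw [← Real.sqrt_sq (norm_nonneg (ContinuousLinearMap.adjoint (B n) x)),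
      ← Real.sqrt_sq (norm_nonneg (B n x)), h2]
  -- Direction 1 : D(T†T) ⊆ D(TT†) with equal values
  have main1 : ∀ x (hx : x ∈ T.domain) (hx2 : T ⟨x, hx⟩ ∈ T.adjoint.domain),
      ∃ (h1 : x ∈ T.adjoint.domain) (h2 : T.adjoint ⟨x, h1⟩ ∈ T.domain),
        T ⟨T.adjoint ⟨x, h1⟩, h2⟩ = T.adjoint ⟨T ⟨x, hx⟩, hx2⟩ := by
    intro x hx hx2
    set Tx := T ⟨x, hx⟩ with hTxdef
    set R := T.adjoint ⟨Tx, hx2⟩ with hRdef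
    set u : ℕ → X := fun n => ContinuousLinearMap.adjoint (B n) x with hudef
    have hBx : ∀ n, B n x = E n Tx := fun n => (hcomm n ⟨x, hx⟩).symm
    have hnu : ∀ n, ‖u n‖ = ‖E n Tx‖ := fun n => by
      rw [hudef]; simp only; rw [hnormeq, hBx]
    have hsq : ∀ n m, n ≤ m → ‖u m - u n‖ ^ 2 = ‖E m Tx‖ ^ 2 - ‖E n Tx‖ ^ 2 := by
      intro n m h
      have e1 : u n = E n (u m) := (hadjBE h x).symm
      rw [e1, hpyth, hnu m, ← e1, hnu n]
    have hcs : CauchySeq u := by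
      refine cauchy_of_sq (s := fun n => ‖E n Tx‖ ^ 2) ?_ fun n m h => hsq n m h
      exact (((htend Tx).norm).pow 2).cauchySeq
    obtain ⟨L, hL⟩ := cauchySeq_tendsto_of_complete hcs
    obtain ⟨h1, hTadjx⟩ := adjoint_limit T hTdense (fun n => hmemAdj n x) (htend x)
      (by
        have : (fun n => T.adjoint ⟨E n x, hmemAdj n x⟩) = u := funext fun n => hTadjE n x
        rw [this]; exact hL)
    have hmemun : ∀ n, u n ∈ T.domain := by
      intro n
      have e1 : u n = E n (u n) := (hadjBE le_rfl x).symm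
      rw [e1]
      exact (hbp n).mem_domain _
    have hTun : ∀ n, T ⟨u n, hmemun n⟩ = E n R := by
      intro n
      calc T ⟨u n, hmemun n⟩
          = T ⟨E n (ContinuousLinearMap.adjoint (B n) x), (hbp n).mem_domain _⟩ :=
            congrArg _ (Subtype.ext (hadjBE le_rfl x).symm)
        _ = B n (ContinuousLinearMap.adjoint (B n) x) := (hBapp n _).symm
        _ = ContinuousLinearMap.adjoint (B n) (B n x) := (hnm n x).symm
        _ = ContinuousLinearMap.adjoint (B n) (E n Tx) := by rw [hBx n]
        _ = ContinuousLinearMap.adjoint (B n) Tx := hadjE2 n Tx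
        _ = E n R := (hEadjT n ⟨Tx, hx2⟩).symm
    obtain ⟨h2, hTL⟩ := closed_limit T hTclosed hmemun hL
      (by
        have : (fun n => T ⟨u n, hmemun n⟩) = fun n => E n R := funext hTun
        rw [this]; exact htend R)
    refine ⟨h1, by rw [hTadjx]; exact h2, ?_⟩
    rw [show (⟨T.adjoint ⟨x, h1⟩, by rw [hTadjx]; exact h2⟩ : T.domain) = ⟨L, h2⟩ from
      Subtype.ext hTadjx, hTL]
  -- Direction 2 : D(TT†) ⊆ D(T†T) with equal values
  have main2 : ∀ x (hx : x ∈ T.adjoint.domain) (hx2 : T.adjoint ⟨x, hx⟩ ∈ T.domain),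
      ∃ (h1 : x ∈ T.domain) (h2 : T ⟨x, h1⟩ ∈ T.adjoint.domain),
        T.adjoint ⟨T ⟨x, h1⟩, h2⟩ = T ⟨T.adjoint ⟨x, hx⟩, hx2⟩ := by
    intro x hx hx2
    set S := T.adjoint ⟨x, hx⟩ with hSdef
    set R := T ⟨S, hx2⟩ with hRdef
    set v : ℕ → X := fun n => B n x with hvdef
    have hadx : ∀ n, ContinuousLinearMap.adjoint (B n) x = E n S := fun n =>
      (hEadjT n ⟨x, hx⟩).symm
    have hnv : ∀ n, ‖v n‖ = ‖E n S‖ := fun n => by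
      rw [hvdef]; simp only; rw [← hnormeq, hadx]
    have hsq : ∀ n m, n ≤ m → ‖v m - v n‖ ^ 2 = ‖E m S‖ ^ 2 - ‖E n S‖ ^ 2 := by
      intro n m h
      have e1 : v n = E n (v m) := (hEB h x).symm
      rw [e1, hpyth, hnv m, ← e1, hnv n]
    have hcs : CauchySeq v := by
      refine cauchy_of_sq (s := fun n => ‖E n S‖ ^ 2) ?_ fun n m h => hsq n m h
      exact (((htend S).norm).pow 2).cauchySeq
    obtain ⟨M, hM⟩ := cauchySeq_tendsto_of_complete hcs
    have hmemEn : ∀ n, E n x ∈ T.domain := fun n => (hbp n).mem_domain x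
    obtain ⟨h1, hTx⟩ := closed_limit T hTclosed hmemEn (htend x)
      (by
        have : (fun n => T ⟨E n x, hmemEn n⟩) = v := funext fun n => (hBapp n x).symm
        rw [this]; exact hM)
    have hmemv : ∀ n, v n ∈ T.adjoint.domain := by
      intro n
      have e1 : v n = E n (v n) := (hEB le_rfl x).symm
      rw [e1]
      exact hmemAdj n _
    have hTv : ∀ n, T.adjoint ⟨v n, hmemv n⟩ = E n R := by
      intro n
      calc T.adjoint ⟨v n, hmemv n⟩
          = T.adjoint ⟨E n (B n x), hmemAdj n _⟩ := congrArg _ (Subtype.ext (hEB le_rfl x).symm)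
        _ = ContinuousLinearMap.adjoint (B n) (B n x) := hTadjE n _
        _ = B n (ContinuousLinearMap.adjoint (B n) x) := hnm n x
        _ = B n (E n S) := by rw [hadx n]
        _ = B n S := hBE le_rfl S
        _ = E n R := (hcomm n ⟨S, hx2⟩).symm
    obtain ⟨h2', hadjM⟩ := adjoint_limit T hTdense hmemv hM
      (by
        have : (fun n => T.adjoint ⟨v n, hmemv n⟩) = fun n => E n R := funext hTv
        rw [this]; exact htend R)
    refine ⟨h1, by rw [hTx]; exact h2', ?_⟩
    rw [show (⟨T ⟨x, h1⟩, by rw [hTx]; exact h2'⟩ : T.adjoint.domain) = ⟨M, h2'⟩ from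
      Subtype.ext hTx, hadjM]
  -- assemble
  have hdom : (pComp T.adjoint T).domain = (pComp T T.adjoint).domain := by
    ext z
    constructor
    · rintro ⟨hz, hz2⟩
      obtain ⟨h1, h2, _⟩ := main1 z hz hz2
      exact ⟨h1, h2⟩
    · rintro ⟨hz, hz2⟩
      obtain ⟨h1, h2, _⟩ := main2 z hz hz2
      exact ⟨h1, h2⟩
  refine LinearPMap.ext hdom ?_
  intro z hz hz'
  obtain ⟨hzT, hzT2⟩ := hz
  obtain ⟨hzA, hzA2⟩ := hz'
  obtain ⟨h1, h2, heq⟩ := main1 z hzT hzT2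
  show T.adjoint ⟨T ⟨z, hzT⟩, hzT2⟩ = T ⟨T.adjoint ⟨z, hzA⟩, hzA2⟩
  rw [← heq]

end Stmt14
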